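/- Assume M > 0. For all finite Borel measures ν, λ⁺, λ⁻ on T one has M·φ( max( λ⁺(T) / (M·(1 + ν(T)²)), 1) ) ≤ Ent(λ⁺|θ_ν) + Ent(λ⁻|θ_ν), and likewise with λ⁻(T) in place of λ⁺(T) on the left-hand side. -/

import Mathlib

open MeasureTheory
open scoped ENNReal Classical

/-- The entropy function `φ(s) = s·log s − s + 1` (note `φ(0) = 1` since `Real.log 0 = 0`). -/
noncomputable def phiEnt (s : ℝ) : ℝ := s * Real.log s - s + 1

/-- Relative entropy `Ent(μ|ϑ) = ∫ φ(dμ/dϑ) dϑ` if `μ ≪ ϑ`, `+∞` otherwise. -/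
noncomputable def Ent {T : Type*} [MeasurableSpace T] (μ ϑ : Measure T) : ℝ≥0∞ :=
  if μ ≪ ϑ then ∫⁻ x, ENNReal.ofReal (phiEnt ((μ.rnDeriv ϑ x).toReal)) ∂ϑ else ⊤

/-- `c_ν(x) = ∫ c(x,y) ν(dy)`. -/
noncomputable def cInt {T : Type*} [MeasurableSpace T] (c : T → T → ℝ) (ν : Measure T) (x : T) : ℝ :=
  ∫ y, c x y ∂ν

/-- The birth kernel `κ⁺_ν = c_ν · γ`. -/
noncomputable def kBirth {T : Type*} [MeasurableSpace T] (γ : Measure T) (c : T → T → ℝ)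
    (ν : Measure T) : Measure T :=
  γ.withDensity fun x => ENNReal.ofReal (cInt c ν x)

/-- The death kernel `κ⁻_ν = c_ν · ν`. -/
noncomputable def kDeath {T : Type*} [MeasurableSpace T] (c : T → T → ℝ)
    (ν : Measure T) : Measure T :=
  ν.withDensity fun x => ENNReal.ofReal (cInt c ν x)

/-- The geometric mean `θ_ν` of `κ⁺_ν` and `κ⁻_ν`. -/
noncomputable def thetaM {T : Type*} [MeasurableSpace T] (γ : Measure T) (c : T → T → ℝ)
    (ν : Measure T) : Measure T :=
  (kBirth γ c ν + kDeath c ν).withDensity fun x =>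
    ((kBirth γ c ν).rnDeriv (kBirth γ c ν + kDeath c ν) x *
      (kDeath c ν).rnDeriv (kBirth γ c ν + kDeath c ν) x) ^ (1 / 2 : ℝ)

lemma phiEnt_nonneg {s : ℝ} (hs : 0 ≤ s) : 0 ≤ phiEnt s := by
  rcases eq_or_lt_of_le hs with h | h
  · simp [phiEnt, ← h]
  · have h1 := Real.log_le_sub_one_of_pos (inv_pos.2 h)
    rw [Real.log_inv] at h1
    have h2 : 1 - s⁻¹ ≤ Real.log s := by linarith
    have h3 : s * (1 - s⁻¹) ≤ s * Real.log s := mul_le_mul_of_nonneg_left h2 hs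
    have h4 : s * s⁻¹ = 1 := mul_inv_cancel₀ h.ne'
    unfold phiEnt; nlinarith

lemma phiEnt_continuous : Continuous phiEnt := by
  unfold phiEnt
  exact (Real.continuous_mul_log.sub continuous_id).add continuous_const

lemma phiEnt_convexOn : ConvexOn ℝ (Set.Ici 0) phiEnt := by
  have h1 := Real.convexOn_mul_log
  have h2 : ConvexOn ℝ (Set.Ici (0:ℝ)) (fun x : ℝ => -x + 1) :=
    ⟨convex_Ici 0, fun x _ y _ a b _ _ hab => by
      simp only [smul_eq_mul]; nlinarith⟩
  have h3 := h1.add h2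
  have he : phiEnt = fun x : ℝ => x * Real.log x + (-x + 1) := by
    funext x; unfold phiEnt; ring
  rw [he]; exact h3

lemma phiEnt_mono {t A m : ℝ} (ht : 0 < t) (htA : t ≤ A) (hAm : A ≤ m) :
    A * phiEnt (m / A) ≤ t * phiEnt (m / t) := by
  have hA : 0 < A := lt_of_lt_of_le ht htA
  have hm : 0 < m := lt_of_lt_of_le hA hAm
  have e1 : A * phiEnt (m / A) = m * Real.log (m / A) - m + A := by
    unfold phiEnt; field_simp
  have e2 : t * phiEnt (m / t) = m * Real.log (m / t) - m + t := by
    unfold phiEnt; field_simp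
  have l1 : Real.log (m / A) = Real.log m - Real.log A := Real.log_div hm.ne' hA.ne'
  have l2 : Real.log (m / t) = Real.log m - Real.log t := Real.log_div hm.ne' ht.ne'
  have l3 : Real.log (A / t) = Real.log A - Real.log t := Real.log_div hA.ne' ht.ne'
  have h5 := Real.log_le_sub_one_of_pos (div_pos ht hA)
  have l4 : Real.log (t / A) = Real.log t - Real.log A := Real.log_div ht.ne' hA.ne'
  have hlog_nonneg : 0 ≤ Real.log (A / t) := Real.log_nonneg ((one_le_div ht).2 htA)
  have key : A - t ≤ m * Real.log (A / t) := by
    have hAl : A * (1 - t / A) ≤ A * Real.log (A / t) := by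
      apply mul_le_mul_of_nonneg_left _ hA.le
      rw [l3]; rw [l4] at h5
      have : t / A ≤ t / A := le_refl _
      nlinarith [div_le_one_of_le₀ htA hA.le]
    have hA2 : A * (1 - t / A) = A - t := by field_simp
    have hml : A * Real.log (A / t) ≤ m * Real.log (A / t) :=
      mul_le_mul_of_nonneg_right hAm hlog_nonneg
    linarith
  rw [e1, e2, l1, l2]
  rw [l3] at key
  nlinarith

lemma cInt_le {T : Type*} [MeasurableSpace T] (c : T → T → ℝ)
    (hc_meas : Measurable fun p : T × T => c p.1 p.2)
    (hc_nonneg : ∀ x y, 0 ≤ c x y)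
    (hc_bdd : BddAbove (Set.range fun p : T × T => c p.1 p.2))
    (ν : Measure T) [IsFiniteMeasure ν] (x : T) :
    cInt c ν x ≤ (⨆ p : T × T, c p.1 p.2) * (ν Set.univ).toReal := by
  set K := ⨆ p : T × T, c p.1 p.2
  have hKb : ∀ y, c x y ≤ K := fun y => le_ciSup hc_bdd (x, y)
  have hmeas : Measurable fun y => c x y := hc_meas.comp (measurable_const.prodMk measurable_id)
  have hint : Integrable (fun y => c x y) ν := by
    refine Integrable.mono' (integrable_const K) hmeas.aestronglyMeasurable
      (ae_of_all _ fun y => ?_)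
    rw [Real.norm_eq_abs, abs_of_nonneg (hc_nonneg x y)]
    exact hKb y
  have h := integral_mono hint (integrable_const K) hKb
  rw [integral_const, smul_eq_mul] at h
  calc cInt c ν x = ∫ y, c x y ∂ν := rfl
    _ ≤ (ν Set.univ).toReal * K := h
    _ = K * (ν Set.univ).toReal := mul_comm _ _

lemma theta_bound {T : Type*} [MeasurableSpace T] (γ : Measure T) [IsFiniteMeasure γ]
    (c : T → T → ℝ) (hc_meas : Measurable fun p : T × T => c p.1 p.2)
    (hc_nonneg : ∀ x y, 0 ≤ c x y)
    (hc_bdd : BddAbove (Set.range fun p : T × T => c p.1 p.2))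
    (ν : Measure T) [IsFiniteMeasure ν] (hK : 0 ≤ ⨆ p : T × T, c p.1 p.2) :
    thetaM γ c ν Set.univ ≤
      ENNReal.ofReal ((⨆ p : T × T, c p.1 p.2) * (1 + (γ Set.univ).toReal) *
        (1 + (ν Set.univ).toReal ^ 2)) := by
  set K := ⨆ p : T × T, c p.1 p.2 with hKdef
  set gT := (γ Set.univ).toReal with hgT
  set nT := (ν Set.univ).toReal with hnT
  have hgT0 : 0 ≤ gT := ENNReal.toReal_nonneg
  have hnT0 : 0 ≤ nT := ENNReal.toReal_nonneg
  set κp := kBirth γ c ν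
  set κm := kDeath c ν
  set σ := κp + κm with hσ
  have hb : κp Set.univ ≤ ENNReal.ofReal (K * nT) * γ Set.univ := by
    rw [show κp = kBirth γ c ν from rfl, kBirth, withDensity_apply _ MeasurableSet.univ,
      Measure.restrict_univ]
    calc ∫⁻ x, ENNReal.ofReal (cInt c ν x) ∂γ
        ≤ ∫⁻ _, ENNReal.ofReal (K * nT) ∂γ :=
          lintegral_mono fun x => ENNReal.ofReal_le_ofReal (cInt_le c hc_meas hc_nonneg hc_bdd ν x)
      _ = ENNReal.ofReal (K * nT) * γ Set.univ := lintegral_const _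
  have hd : κm Set.univ ≤ ENNReal.ofReal (K * nT) * ν Set.univ := by
    rw [show κm = kDeath c ν from rfl, kDeath, withDensity_apply _ MeasurableSet.univ,
      Measure.restrict_univ]
    calc ∫⁻ x, ENNReal.ofReal (cInt c ν x) ∂ν
        ≤ ∫⁻ _, ENNReal.ofReal (K * nT) ∂ν :=
          lintegral_mono fun x => ENNReal.ofReal_le_ofReal (cInt_le c hc_meas hc_nonneg hc_bdd ν x)
      _ = ENNReal.ofReal (K * nT) * ν Set.univ := lintegral_const _
  have hpt : ∀ x, (κp.rnDeriv σ x * κm.rnDeriv σ x) ^ (1 / 2 : ℝ) ≤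
      κp.rnDeriv σ x + κm.rnDeriv σ x := by
    intro x
    set a := κp.rnDeriv σ x
    set b := κm.rnDeriv σ x
    have h1 : a * b ≤ (a + b) ^ (2 : ℝ) := by
      rw [show (2:ℝ) = ((2:ℕ):ℝ) by norm_num, ENNReal.rpow_natCast, pow_two]
      exact mul_le_mul' le_self_add le_add_self
    calc (a * b) ^ (1 / 2 : ℝ) ≤ ((a + b) ^ (2 : ℝ)) ^ (1 / 2 : ℝ) :=
          ENNReal.rpow_le_rpow h1 (by norm_num)
      _ = a + b := by rw [← ENNReal.rpow_mul]; norm_num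
  have hθ : thetaM γ c ν Set.univ ≤ κp Set.univ + κm Set.univ := by
    rw [thetaM, withDensity_apply _ MeasurableSet.univ, Measure.restrict_univ]
    calc ∫⁻ x, (κp.rnDeriv σ x * κm.rnDeriv σ x) ^ (1 / 2 : ℝ) ∂σ
        ≤ ∫⁻ x, (κp.rnDeriv σ x + κm.rnDeriv σ x) ∂σ := lintegral_mono hpt
      _ = (∫⁻ x, κp.rnDeriv σ x ∂σ) + ∫⁻ x, κm.rnDeriv σ x ∂σ :=
          lintegral_add_left (κp.measurable_rnDeriv σ) _
      _ ≤ κp Set.univ + κm Set.univ :=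
          add_le_add (Measure.lintegral_rnDeriv_le) (Measure.lintegral_rnDeriv_le)
  have hγe : γ Set.univ = ENNReal.ofReal gT := (ENNReal.ofReal_toReal (measure_ne_top γ _)).symm
  have hνe : ν Set.univ = ENNReal.ofReal nT := (ENNReal.ofReal_toReal (measure_ne_top ν _)).symm
  have hKn : 0 ≤ K * nT := mul_nonneg hK hnT0
  calc thetaM γ c ν Set.univ ≤ κp Set.univ + κm Set.univ := hθ
    _ ≤ ENNReal.ofReal (K * nT) * γ Set.univ + ENNReal.ofReal (K * nT) * ν Set.univ :=
        add_le_add hb hd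
    _ = ENNReal.ofReal (K * nT * gT + K * nT * nT) := by
        rw [hγe, hνe, ← ENNReal.ofReal_mul hKn, ← ENNReal.ofReal_mul hKn,
          ← ENNReal.ofReal_add (mul_nonneg hKn hgT0) (mul_nonneg hKn hnT0)]
    _ ≤ ENNReal.ofReal (K * (1 + gT) * (1 + nT ^ 2)) := by
        apply ENNReal.ofReal_le_ofReal
        nlinarith [mul_nonneg hK (mul_nonneg hgT0 (sq_nonneg (nT - 1))),
          mul_nonneg hK (mul_nonneg hgT0 hnT0), mul_nonneg hK (sq_nonneg (nT - 1))]

lemma ent_lower {T : Type*} [MeasurableSpace T] (lam θ : Measure T) [IsFiniteMeasure lam]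
    [IsFiniteMeasure θ] {M A : ℝ} (hM : 0 < M) (hMA : M ≤ A)
    (hθA : (θ Set.univ).toReal ≤ A) :
    ENNReal.ofReal (M * phiEnt (max ((lam Set.univ).toReal / A) 1)) ≤ Ent lam θ := by
  have hA : 0 < A := lt_of_lt_of_le hM hMA
  set m := (lam Set.univ).toReal with hmdef
  have hm0 : 0 ≤ m := ENNReal.toReal_nonneg
  by_cases hle : m ≤ A
  · have hmax : max (m / A) 1 = 1 := max_eq_right ((div_le_one hA).2 hle)
    rw [hmax]
    have : phiEnt 1 = 0 := by unfold phiEnt; simp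
    rw [this, mul_zero, ENNReal.ofReal_zero]
    exact zero_le
  · push_neg at hle
    have hmax : max (m / A) 1 = m / A := max_eq_left (le_of_lt ((one_lt_div hA).2 hle))
    rw [hmax]
    unfold Ent
    split_ifs with hac
    swap
    · exact le_top
    have hθ0 : θ Set.univ ≠ 0 := by
      intro h
      have h2 : lam Set.univ = 0 := hac h
      have : m = 0 := by rw [hmdef, h2]; simp
      linarith
    haveI : NeZero θ := ⟨fun h => hθ0 (by rw [h]; simp)⟩
    set t := (θ Set.univ).toReal with htdef
    have ht : 0 < t := ENNReal.toReal_pos hθ0 (measure_ne_top θ _)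
    set f := fun x => (lam.rnDeriv θ x).toReal with hfdef
    have hf_int : Integrable f θ := Measure.integrable_toReal_rnDeriv
    have hf_meas : Measurable f := (lam.measurable_rnDeriv θ).ennreal_toReal
    have hint : ∫ x, f x ∂θ = m := Measure.integral_toReal_rnDeriv hac
    have h_nonneg : 0 ≤ᵐ[θ] fun x => phiEnt (f x) :=
      ae_of_all _ fun x => phiEnt_nonneg ENNReal.toReal_nonneg
    by_cases hgi : Integrable (fun x => phiEnt (f x)) θ
    · have hJ := phiEnt_convexOn.map_average_le phiEnt_continuous.continuousOn isClosed_Ici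
        (ae_of_all _ fun x => (Set.mem_Ici.2 ENNReal.toReal_nonneg :
          f x ∈ Set.Ici (0:ℝ))) hf_int hgi
      rw [average_eq, average_eq, hint, smul_eq_mul, smul_eq_mul] at hJ
      have hJ' : t * phiEnt (m / t) ≤ ∫ x, phiEnt (f x) ∂θ := by
        have h2 : t * phiEnt (t⁻¹ * m) ≤ t * (t⁻¹ * ∫ x, phiEnt (f x) ∂θ) :=
          mul_le_mul_of_nonneg_left hJ ht.le
        rw [← mul_assoc, mul_inv_cancel₀ ht.ne', one_mul] at h2
        rw [div_eq_inv_mul]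
        calc t * phiEnt (t⁻¹ * m) = t * phiEnt (t⁻¹ * m) := rfl
          _ ≤ ∫ x, phiEnt (f x) ∂θ := h2
      have hreal : M * phiEnt (m / A) ≤ ∫ x, phiEnt (f x) ∂θ := by
        have h1 : M * phiEnt (m / A) ≤ A * phiEnt (m / A) :=
          mul_le_mul_of_nonneg_right hMA (phiEnt_nonneg (div_nonneg hm0 hA.le))
        have h2 : A * phiEnt (m / A) ≤ t * phiEnt (m / t) := phiEnt_mono ht hθA hle.le
        linarith
      calc ENNReal.ofReal (M * phiEnt (m / A)) ≤ ENNReal.ofReal (∫ x, phiEnt (f x) ∂θ) :=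
            ENNReal.ofReal_le_ofReal hreal
        _ = ∫⁻ x, ENNReal.ofReal (phiEnt (f x)) ∂θ :=
            ofReal_integral_eq_lintegral_ofReal hgi h_nonneg
    · have htop : ∫⁻ x, ENNReal.ofReal (phiEnt (f x)) ∂θ = ⊤ := by
        by_contra h
        exact hgi ((lintegral_ofReal_ne_top_iff_integrable
          ((phiEnt_continuous.measurable.comp hf_meas).aestronglyMeasurable) h_nonneg).1 h)
      rw [htop]; exact le_top

/-- Lemma 2.1(iii): with `M = ‖c‖_∞·(1 + γ(T)) > 0`, for all finite measures `ν, λ⁺, λ⁻`,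
`M·φ(max(λ⁺(T)/(M·(1+ν(T)²)), 1)) ≤ Ent(λ⁺|θ_ν) + Ent(λ⁻|θ_ν)`, and likewise for `λ⁻`. -/
theorem dissipation_lower_bound {T : Type*} [TopologicalSpace T] [CompactSpace T] [PolishSpace T]
    [MeasurableSpace T] [BorelSpace T]
    (γ : Measure T) [IsFiniteMeasure γ]
    (c : T → T → ℝ) (hc_meas : Measurable fun p : T × T => c p.1 p.2)
    (hc_nonneg : ∀ x y, 0 ≤ c x y)
    (hc_bdd : BddAbove (Set.range fun p : T × T => c p.1 p.2))
    (hc_diag : ∀ x, c x x = 0)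
    (hM : 0 < (⨆ p : T × T, c p.1 p.2) * (1 + (γ Set.univ).toReal))
    (ν lamP lamM : Measure T) [IsFiniteMeasure ν] [IsFiniteMeasure lamP] [IsFiniteMeasure lamM] :
    ENNReal.ofReal ((⨆ p : T × T, c p.1 p.2) * (1 + (γ Set.univ).toReal) *
        phiEnt (max ((lamP Set.univ).toReal /
          ((⨆ p : T × T, c p.1 p.2) * (1 + (γ Set.univ).toReal) *
            (1 + (ν Set.univ).toReal ^ 2))) 1)) ≤
      Ent lamP (thetaM γ c ν) + Ent lamM (thetaM γ c ν) ∧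
    ENNReal.ofReal ((⨆ p : T × T, c p.1 p.2) * (1 + (γ Set.univ).toReal) *
        phiEnt (max ((lamM Set.univ).toReal /
          ((⨆ p : T × T, c p.1 p.2) * (1 + (γ Set.univ).toReal) *
            (1 + (ν Set.univ).toReal ^ 2))) 1)) ≤
      Ent lamP (thetaM γ c ν) + Ent lamM (thetaM γ c ν) := by
  have hgT0 : (0:ℝ) ≤ (γ Set.univ).toReal := ENNReal.toReal_nonneg
  have hKpos : 0 < ⨆ p : T × T, c p.1 p.2 := by
    by_contra h
    push_neg at h
    nlinarith
  have hθb := theta_bound γ c hc_meas hc_nonneg hc_bdd ν hKpos.le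
  haveI : IsFiniteMeasure (thetaM γ c ν) := ⟨lt_of_le_of_lt hθb ENNReal.ofReal_lt_top⟩
  have hnT0 : (0:ℝ) ≤ (ν Set.univ).toReal := ENNReal.toReal_nonneg
  have hA0 : (0:ℝ) ≤ (⨆ p : T × T, c p.1 p.2) * (1 + (γ Set.univ).toReal) *
      (1 + (ν Set.univ).toReal ^ 2) := by nlinarith [sq_nonneg (ν Set.univ).toReal]
  have hθA : (thetaM γ c ν Set.univ).toReal ≤ (⨆ p : T × T, c p.1 p.2) *
      (1 + (γ Set.univ).toReal) * (1 + (ν Set.univ).toReal ^ 2) :=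
    ENNReal.toReal_le_of_le_ofReal hA0 hθb
  have hMA : (⨆ p : T × T, c p.1 p.2) * (1 + (γ Set.univ).toReal) ≤
      (⨆ p : T × T, c p.1 p.2) * (1 + (γ Set.univ).toReal) *
        (1 + (ν Set.univ).toReal ^ 2) :=
    le_mul_of_one_le_right hM.le (by nlinarith [sq_nonneg (ν Set.univ).toReal])
  exact ⟨le_trans (ent_lower lamP _ hM hMA hθA) le_self_add,
         le_trans (ent_lower lamM _ hM hMA hθA) le_add_self⟩
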